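/- Let x ∈ ℝ^d, k ∈ [d], p := k/d, and S(x) = (d/k)·rand_k(x) with ω a uniformly random k-element subset of {1,...,d}. Then E_ω[‖S(x) − x‖²] = (1/p − 1)·‖x‖², where ‖·‖ is the Euclidean norm. -/

import Mathlib

open Finset

lemma count_mem_powersetCard {α : Type*} [DecidableEq α] (s : Finset α) (j : α)
    (hj : j ∈ s) (k : ℕ) :
    ((s.powersetCard (k+1)).filter (fun ω => j ∈ ω)).card =
      ((s.erase j).powersetCard k).card := by
  apply Finset.card_bij (fun ω _ => ω.erase j)
  · intro ω hω
    simp only [mem_filter, mem_powersetCard] at hω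
    simp only [mem_powersetCard]
    constructor
    · exact fun a ha => mem_erase.2 ⟨(mem_erase.1 ha).1, hω.1.1 (mem_erase.1 ha).2⟩
    · rw [card_erase_of_mem hω.2, hω.1.2]; omega
  · intro a ha b hb h
    simp only [mem_filter] at ha hb
    rw [← insert_erase ha.2, ← insert_erase hb.2, h]
  · intro ω hω
    simp only [mem_powersetCard] at hω
    refine ⟨insert j ω, ?_, ?_⟩
    · simp only [mem_filter, mem_powersetCard]
      have hjω : j ∉ ω := fun h => (mem_erase.1 (hω.1 h)).1 rfl
      exact ⟨⟨insert_subset hj (hω.1.trans (erase_subset _ _)),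
        by rw [card_insert_of_notMem hjω, hω.2]⟩, mem_insert_self _ _⟩
    · have hjω : j ∉ ω := fun h => (mem_erase.1 (hω.1 h)).1 rfl
      rw [erase_insert hjω]

/-- Variance of the scaled rand_k sparsifier: with p = k/d,
`E_ω ‖S(x) - x‖² = (1/p - 1) ‖x‖²`, where `‖·‖²` is the sum of squared coordinates. -/
theorem randk_variance (d k : ℕ) (hk1 : 1 ≤ k) (hkd : k ≤ d) (x : Fin d → ℝ) :
    (((Finset.univ : Finset (Fin d)).powersetCard k).card : ℝ)⁻¹ *
        ∑ ω ∈ (Finset.univ : Finset (Fin d)).powersetCard k,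
          ∑ j, (((d : ℝ) / k) * (if j ∈ ω then x j else 0) - x j) ^ 2
      = (1 / ((k : ℝ) / d) - 1) * ∑ j, (x j) ^ 2 := by
  have hd1 : 1 ≤ d := hk1.trans hkd
  have hN1 : ∀ j : Fin d,
      (((Finset.univ : Finset (Fin d)).powersetCard k).filter (fun ω => j ∈ ω)).card
        = (d-1).choose (k-1) := by
    intro j
    obtain ⟨k', rfl⟩ : ∃ k', k = k' + 1 := ⟨k - 1, (Nat.succ_pred_eq_of_pos hk1).symm⟩
    rw [count_mem_powersetCard _ _ (mem_univ j), card_powersetCard,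
      card_erase_of_mem (mem_univ j), card_univ, Fintype.card_fin]
    simp
  have hkey : (d : ℕ) * (d-1).choose (k-1) = k * d.choose k := by
    obtain ⟨k', rfl⟩ : ∃ k', k = k' + 1 := ⟨k - 1, (Nat.succ_pred_eq_of_pos hk1).symm⟩
    obtain ⟨d', rfl⟩ : ∃ d', d = d' + 1 := ⟨d - 1, (Nat.succ_pred_eq_of_pos hd1).symm⟩
    simpa [mul_comm] using Nat.add_one_mul_choose_eq d' k'
  have hNcard : ((Finset.univ : Finset (Fin d)).powersetCard k).card = d.choose k := by
    rw [card_powersetCard, card_univ, Fintype.card_fin]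
  rw [Finset.sum_comm]
  have hsum : ∀ j : Fin d,
      ∑ ω ∈ (Finset.univ : Finset (Fin d)).powersetCard k,
        (((d : ℝ) / k) * (if j ∈ ω then x j else 0) - x j) ^ 2
      = ((d-1).choose (k-1) : ℝ) * (((d : ℝ)/k - 1) * x j) ^ 2
        + ((d.choose k : ℝ) - (d-1).choose (k-1)) * (x j) ^ 2 := by
    intro j
    have : ∀ ω : Finset (Fin d),
        (((d : ℝ) / k) * (if j ∈ ω then x j else 0) - x j) ^ 2
        = if j ∈ ω then (((d : ℝ)/k - 1) * x j) ^ 2 else (x j) ^ 2 := by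
      intro ω; split <;> ring
    simp_rw [this]
    rw [Finset.sum_ite, Finset.sum_const, Finset.sum_const, nsmul_eq_mul, nsmul_eq_mul,
      hN1 j, Finset.filter_not, Finset.card_sdiff_of_subset (filter_subset _ _), hN1 j, hNcard]
    have hle : (d-1).choose (k-1) ≤ d.choose k := by
      have := hkey
      nlinarith [Nat.one_le_iff_ne_zero.1 hk1, hk1, hkd, this]
    push_cast [hle]
    ring
  simp_rw [hsum]
  rw [Finset.sum_add_distrib, ← Finset.mul_sum, ← Finset.mul_sum]
  have hkR : (k : ℝ) ≠ 0 := Nat.cast_ne_zero.2 (Nat.one_le_iff_ne_zero.1 hk1)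
  have hdR : (d : ℝ) ≠ 0 := Nat.cast_ne_zero.2 (Nat.one_le_iff_ne_zero.1 hd1)
  have hC : (d.choose k : ℝ) ≠ 0 := Nat.cast_ne_zero.2 (Nat.choose_pos hkd).ne'
  have hkeyR : (d : ℝ) * (d-1).choose (k-1) = k * d.choose k := by exact_mod_cast hkey
  have hfac : ∀ j : Fin d, (((d : ℝ)/k - 1) * x j) ^ 2 = ((d : ℝ)/k - 1)^2 * (x j)^2 := by
    intro j; ring
  simp_rw [hfac]
  rw [← Finset.mul_sum, hNcard]
  set S := ∑ j, (x j) ^ 2 with hS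
  have hscalar : ((d.choose k : ℝ))⁻¹ *
      (((d-1).choose (k-1) : ℝ) * (((d : ℝ)/k - 1)^2)
        + ((d.choose k : ℝ) - (d-1).choose (k-1)))
      = (1 / ((k : ℝ) / d) - 1) := by
    field_simp
    linear_combination ((d:ℝ)-2*k) * hkeyR
  calc ((d.choose k : ℝ))⁻¹ *
      (((d-1).choose (k-1) : ℝ) * (((d : ℝ)/k - 1)^2 * S)
        + ((d.choose k : ℝ) - (d-1).choose (k-1)) * S)
      = (((d.choose k : ℝ))⁻¹ *
          (((d-1).choose (k-1) : ℝ) * (((d : ℝ)/k - 1)^2)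
            + ((d.choose k : ℝ) - (d-1).choose (k-1)))) * S := by ring
    _ = (1 / ((k : ℝ) / d) - 1) * S := by rw [hscalar]
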